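/- Let P_x = (x_0, x_1, …, x_k) be the minimal partition of x ∈ ℚ⁺, and write x_j = p'_j/q'_j with gcd(p'_j, q'_j) = 1 and q'_j ≥ 0. Then: (i) x < (p'_{j−1} − p'_j)/(q'_{j−1} − q'_j) for all j = 1, 2, …, k; and (ii) ⌈(x q'_{j+1} − p'_{j+1})/(x q'_j − p'_j)⌉ = p'_{j−1} q'_{j+1} − p'_{j+1} q'_{j−1} for all j = 1, 2, …, k−1. -/

import Mathlib

/-- Lemma 2.8: for the minimal partition `(x_0, …, x_k)` of `x ∈ ℚ⁺`, written
`x_j = p_j / q_j` with `gcd(p_j, q_j) = 1` and `q_j ≥ 0` (and `x_k = −∞ = −1/0`):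
(i) `x < (p_{j−1} − p_j)/(q_{j−1} − q_j)` for `j = 1, …, k`;
(ii) `⌈(x q_{j+1} − p_{j+1})/(x q_j − p_j)⌉ = p_{j−1} q_{j+1} − p_{j+1} q_{j−1}`
for `j = 1, …, k−1`. -/
theorem minimal_partition_ceil_lemma (x : ℚ) (hx : 0 < x) (k : ℕ)
    (p q : ℕ → ℤ)
    (hcop : ∀ j ≤ k, Int.gcd (p j) (q j) = 1)
    (hqnn : ∀ j ≤ k, 0 ≤ q j)
    (hx0 : (p 0 : ℚ) / (q 0 : ℚ) = x) (hq0 : 0 < q 0)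
    (hdet : ∀ j < k, p j * q (j + 1) - p (j + 1) * q j = 1)
    (hdec : ∀ j < k, q (j + 1) < q j)
    (hpk : p k = -1) (hqk : q k = 0) :
    (∀ j, 0 < j → j ≤ k →
      x < ((p (j - 1) - p j : ℤ) : ℚ) / ((q (j - 1) - q j : ℤ) : ℚ)) ∧
    (∀ j, 0 < j → j + 1 ≤ k →
      (⌈(x * (q (j + 1) : ℚ) - (p (j + 1) : ℚ)) / (x * (q j : ℚ) - (p j : ℚ))⌉ : ℤ)
        = p (j - 1) * q (j + 1) - p (j + 1) * q (j - 1)) := by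
  have hq0Q : (0:ℚ) < (q 0 : ℚ) := by exact_mod_cast hq0
  set A : ℕ → ℤ := fun j => p 0 * q j - p j * q 0 with hA
  have hxq : ∀ j, x * (q j : ℚ) - (p j : ℚ) = (A j : ℚ) / (q 0 : ℚ) := by
    intro j
    rw [← hx0, hA]
    field_simp
    push_cast
    ring
  have hrec : ∀ i, i + 2 ≤ k →
      A (i+2) = (p i * q (i+2) - p (i+2) * q i) * A (i+1) - A i := by
    intro i hi
    have hd1 := hdet i (by omega)
    have hd2 := hdet (i+1) (by omega)
    simp only [hA]
    linear_combination (-(p 0 * q (i+2) - p (i+2) * q 0)) * hd1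
      - (p 0 * q i - p i * q 0) * hd2
  have hqrec : ∀ i, i + 2 ≤ k →
      q (i+1) * (p i * q (i+2) - p (i+2) * q i) = q i + q (i+2) := by
    intro i hi
    have hd1 := hdet i (by omega)
    have hd2 := hdet (i+1) (by omega)
    linear_combination q (i+2) * hd1 + q i * hd2
  have key : ∀ j, j + 1 ≤ k → 0 ≤ A j ∧ A j < A (j+1) := by
    intro j
    induction j with
    | zero =>
      intro h
      have hd0 := hdet 0 (by omega)
      constructor
      · simp [hA]
      · simp only [hA]
        linarith
    | succ i ih =>
      intro h
      obtain ⟨h0, h1⟩ := ih (by omega)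
      have hA1 : 0 ≤ A (i+1) := le_of_lt (lt_of_le_of_lt h0 h1)
      refine ⟨hA1, ?_⟩
      set a := p i * q (i+2) - p (i+2) * q i with ha
      have hr : A (i+2) = a * A (i+1) - A i := hrec i (by omega)
      have hqr : q (i+1) * a = q i + q (i+2) := hqrec i (by omega)
      have hq1pos : 0 < q (i+1) := by
        have h2 : q (i+2) < q (i+1) := hdec (i+1) (by omega)
        have := hqnn (i+2) (by omega)
        omega
      have hqlt := hdec i (by omega)
      have h2nn := hqnn (i+2) (by omega)
      have ha2 : 2 ≤ a := by nlinarith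
      have hprod : 0 ≤ (a - 2) * A (i+1) :=
        mul_nonneg (by linarith) hA1
      have hexp : a * A (i+1) = (a - 2) * A (i+1) + 2 * A (i+1) := by ring
      have hAe : A (i + 1 + 1) = A (i + 2) := rfl
      linarith
  constructor
  · intro j hj1 hjk
    obtain ⟨i, rfl⟩ : ∃ i, j = i + 1 := ⟨j - 1, by omega⟩
    simp only [Nat.add_sub_cancel]
    have hQ : (0:ℚ) < ((q i - q (i+1) : ℤ) : ℚ) := by
      have := hdec i (by omega)
      exact_mod_cast (by omega : (0:ℤ) < q i - q (i+1))
    rw [← hx0, div_lt_div_iff₀ hq0Q hQ]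
    have hk := (key i (by omega)).2
    simp only [hA] at hk
    have : (p 0 * q i - p i * q 0 : ℚ) < p 0 * q (i+1) - p (i+1) * q 0 := by
      exact_mod_cast hk
    push_cast
    linarith
  · intro j hj1 hjk
    obtain ⟨i, rfl⟩ : ∃ i, j = i + 1 := ⟨j - 1, by omega⟩
    simp only [Nat.add_sub_cancel]
    rw [hxq, hxq]
    obtain ⟨h0, h1⟩ := key i (by omega)
    have hA1Z : 0 < A (i+1) := lt_of_le_of_lt h0 h1
    have hA1 : (0:ℚ) < (A (i+1) : ℚ) := by exact_mod_cast hA1Z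
    have hdivs : ((A (i+2) : ℚ) / (q 0 : ℚ)) / ((A (i+1) : ℚ) / (q 0 : ℚ))
        = (A (i+2) : ℚ) / (A (i+1) : ℚ) := by
      field_simp
    rw [hdivs]
    set a := p i * q (i+2) - p (i+2) * q i with ha
    have hr : A (i+2) = a * A (i+1) - A i := hrec i (by omega)
    rw [Int.ceil_eq_iff]
    constructor
    · rw [lt_div_iff₀ hA1]
      have h' : (a - 1) * A (i+1) < A (i+2) := by nlinarith
      exact_mod_cast h'
    · rw [div_le_iff₀ hA1]
      have h' : A (i+2) ≤ a * A (i+1) := by nlinarith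
      exact_mod_cast h'
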